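/- Let A be an invertible matrix in ℝ^{n×n}, f̂, f, v, e ∈ ℝ^n with ‖A f̂ - (A f + e)‖₂ ≤ ‖A v - (A f + e)‖₂ and ‖v - f‖_∞ ≤ ε. Then ‖f̂ - f‖₂ ≤ κ₂(A) · √n · ε + 2 ‖A⁻¹‖₂ ‖e‖₂, where κ₂(A) = ‖A‖₂ ‖A⁻¹‖₂ is the 2-condition number. -/

import Mathlib

noncomputable def l2OpNorm {m n : Type*} [Fintype m] [Fintype n] [DecidableEq n]
    (A : Matrix m n ℝ) : ℝ :=
  ‖LinearMap.toContinuousLinearMap (Matrix.toEuclideanLin A)‖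

theorem stmt1 (n : ℕ) (A : Matrix (Fin n) (Fin n) ℝ) (hA : IsUnit A)
    (fhat f v e : EuclideanSpace ℝ (Fin n)) (ε : ℝ)
    (hmin : ‖Matrix.toEuclideanLin A fhat - (Matrix.toEuclideanLin A f + e)‖ ≤
            ‖Matrix.toEuclideanLin A v - (Matrix.toEuclideanLin A f + e)‖)
    (hinf : ∀ i, |v i - f i| ≤ ε) :
    ‖fhat - f‖ ≤ (l2OpNorm A * l2OpNorm A⁻¹) * Real.sqrt n * ε
      + 2 * l2OpNorm A⁻¹ * ‖e‖ := by
  have hd : IsUnit A.det := (Matrix.isUnit_iff_isUnit_det A).mp hA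
  set T := LinearMap.toContinuousLinearMap (Matrix.toEuclideanLin A) with hT
  set S := LinearMap.toContinuousLinearMap (Matrix.toEuclideanLin A⁻¹) with hS
  have hcomp : (Matrix.toEuclideanLin A⁻¹).comp (Matrix.toEuclideanLin A)
      = LinearMap.id := by
    rw [Matrix.toEuclideanLin_eq_toLin, ← Matrix.toLin_mul,
      Matrix.nonsing_inv_mul A hd, Matrix.toLin_one]
  have hST : ∀ x : EuclideanSpace ℝ (Fin n), S (T x) = x := by
    intro x
    have := LinearMap.ext_iff.mp hcomp x
    simpa [hS, hT, LinearMap.coe_toContinuousLinearMap'] using this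
  have hvf : ‖v - f‖ ≤ Real.sqrt n * ε := by
    rcases Nat.eq_zero_or_pos n with h0 | hp
    · subst h0
      simp [EuclideanSpace.norm_eq]
    · have hε0 : 0 ≤ ε := le_trans (abs_nonneg _) (hinf ⟨0, hp⟩)
      rw [EuclideanSpace.norm_eq]
      have hsum : ∑ i, ‖(v - f) i‖ ^ 2 ≤ (n : ℝ) * ε ^ 2 := by
        calc ∑ i, ‖(v - f) i‖ ^ 2 ≤ ∑ _i : Fin n, ε ^ 2 := by
              apply Finset.sum_le_sum
              intro i _
              have h1 := hinf i
              have h2 : ‖(v - f) i‖ = |v i - f i| := by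
                simp [Real.norm_eq_abs]
              rw [h2]
              nlinarith [abs_nonneg (v i - f i)]
          _ = (n : ℝ) * ε ^ 2 := by simp [mul_comm]
      calc Real.sqrt (∑ i, ‖(v - f) i‖ ^ 2) ≤ Real.sqrt ((n : ℝ) * ε ^ 2) :=
            Real.sqrt_le_sqrt hsum
        _ = Real.sqrt n * ε := by
            rw [Real.sqrt_mul (by positivity), Real.sqrt_sq hε0]
  have hTmin : ‖T fhat - (T f + e)‖ ≤ ‖T v - (T f + e)‖ := by
    simpa [hT, LinearMap.coe_toContinuousLinearMap'] using hmin
  have hkey : ‖T fhat - T f‖ ≤ ‖T‖ * (Real.sqrt n * ε) + 2 * ‖e‖ := by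
    have e1 : T fhat - T f = (T fhat - (T f + e)) + e := by abel
    calc ‖T fhat - T f‖ ≤ ‖T fhat - (T f + e)‖ + ‖e‖ := by
          rw [e1]; exact norm_add_le _ _
      _ ≤ ‖T v - (T f + e)‖ + ‖e‖ := by gcongr
      _ ≤ (‖T v - T f‖ + ‖e‖) + ‖e‖ := by
          have e2 : T v - (T f + e) = (T v - T f) + (-e) := by abel
          gcongr
          rw [e2]
          simpa using norm_add_le (T v - T f) (-e)
      _ = ‖T (v - f)‖ + 2 * ‖e‖ := by rw [map_sub]; ring
      _ ≤ ‖T‖ * ‖v - f‖ + 2 * ‖e‖ := by gcongr; exact T.le_opNorm _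
      _ ≤ ‖T‖ * (Real.sqrt n * ε) + 2 * ‖e‖ := by gcongr
  have h1 : fhat - f = S (T fhat - T f) := by
    rw [map_sub, hST, hST]
  calc ‖fhat - f‖ = ‖S (T fhat - T f)‖ := by rw [h1]
    _ ≤ ‖S‖ * ‖T fhat - T f‖ := S.le_opNorm _
    _ ≤ ‖S‖ * (‖T‖ * (Real.sqrt n * ε) + 2 * ‖e‖) := by gcongr
    _ = (‖T‖ * ‖S‖) * Real.sqrt n * ε + 2 * ‖S‖ * ‖e‖ := by ring
    _ = (l2OpNorm A * l2OpNorm A⁻¹) * Real.sqrt n * ε + 2 * l2OpNorm A⁻¹ * ‖e‖ := rfl
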